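/- arXiv:2208.04812 — 3 statements merged into one kernel-verified Lean document; each statement's English description precedes it below -/
import Mathlib

section
/- Let A and B be unbounded normal operators on a Hilbert space such that σ(AB) ≠ ℂ and σ(BA) ≠ ℂ. Then σ(AB) = σ(BA). -/
open LinearPMap

set_option linter.unusedSectionVars false

noncomputable section

section BanachDefs

variable {H : Type*} [NormedAddCommGroup H] [NormedSpace ℂ H]

/-- Composition `g ∘ f` of unbounded operators, with the natural (maximal) domain
`{x ∈ dom f : f x ∈ dom g}`. -/
def LinearPMap.pComp (g f : H →ₗ.[ℂ] H) : H →ₗ.[ℂ] H where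
  domain := (g.domain.comap f.toFun).map f.domain.subtype
  toFun := g.toFun ∘ₗ (f.toFun.restrict (p := g.domain.comap f.toFun) (q := g.domain)
      (fun _ hx => hx)) ∘ₗ
    ((Submodule.equivMapOfInjective f.domain.subtype (Submodule.injective_subtype _)
      (g.domain.comap f.toFun)).symm).toLinearMap

/-- `n`-th power of an unbounded operator; `T^0` is the identity on all of `H`. -/
def LinearPMap.pPow (T : H →ₗ.[ℂ] H) : ℕ → (H →ₗ.[ℂ] H)
  | 0 => (LinearMap.id : H →ₗ[ℂ] H).toPMap ⊤
  | n + 1 => T.pComp (T.pPow n)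

theorem LinearPMap.pPow_domain_succ_le (T : H →ₗ.[ℂ] H) (n : ℕ) :
    (T.pPow (n + 1)).domain ≤ (T.pPow n).domain := by
  intro x hx
  simp_rw [pPow, pComp] at hx
  obtain ⟨y, -, rfl⟩ := hx
  exact y.2

theorem LinearPMap.pPow_domain_le (T : H →ₗ.[ℂ] H) {i n : ℕ} (h : i ≤ n) :
    (T.pPow n).domain ≤ (T.pPow i).domain := by
  induction n with
  | zero => exact Nat.le_zero.mp h ▸ le_rfl
  | succ n ih =>
    rcases Nat.lt_succ_iff_lt_or_eq.mp (Nat.lt_succ_of_le h) with h' | rfl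
    · exact le_trans (T.pPow_domain_succ_le n) (ih (Nat.lt_succ_iff.mp h'))
    · exact le_rfl

/-- `p(T)` for a complex polynomial `p`, defined on `D(T^n)` where `n = deg p`. -/
def LinearPMap.polyApp (p : Polynomial ℂ) (T : H →ₗ.[ℂ] H) : H →ₗ.[ℂ] H where
  domain := (T.pPow p.natDegree).domain
  toFun := ∑ i ∈ (Finset.range (p.natDegree + 1)).attach,
    p.coeff i.1 • ((T.pPow i.1).toFun ∘ₗ Submodule.inclusion
      (T.pPow_domain_le (Nat.lt_succ_iff.mp (Finset.mem_range.mp i.2))))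

/-- `A - μ • I` with domain `dom A`. -/
def LinearPMap.subConst (A : H →ₗ.[ℂ] H) (μ : ℂ) : H →ₗ.[ℂ] H :=
  ⟨A.domain, A.toFun - μ • A.domain.subtype⟩

/-- An unbounded operator is boundedly invertible if it is bijective from its domain onto `H`
with an everywhere-defined bounded (continuous) inverse. -/
def LinearPMap.IsBddInvertible (A : H →ₗ.[ℂ] H) : Prop :=
  ∃ B : H →L[ℂ] H, (∀ y : H, ∃ hy : B y ∈ A.domain, A ⟨B y, hy⟩ = y) ∧
    ∀ x : A.domain, B (A x) = (x : H)

/-- The spectrum of an unbounded operator: `μ ∉ σ(A)` iff `A - μI` is bijective with a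
bounded everywhere-defined inverse. -/
def LinearPMap.pSpectrum (A : H →ₗ.[ℂ] H) : Set ℂ :=
  {μ | ¬ (A.subConst μ).IsBddInvertible}

/-- The kernel of an unbounded operator, as a subset of `H`. -/
def LinearPMap.pKer (A : H →ₗ.[ℂ] H) : Set H :=
  {x | ∃ hx : x ∈ A.domain, A ⟨x, hx⟩ = 0}

/-- The range of an unbounded operator. -/
def LinearPMap.pRan (A : H →ₗ.[ℂ] H) : Set H :=
  Set.range fun x : A.domain => A x

/-- A bounded everywhere-defined operator seen as an unbounded operator. -/
def ContinuousLinearMap.toPMapTop (B : H →L[ℂ] H) : H →ₗ.[ℂ] H :=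
  (B : H →ₗ[ℂ] H).toPMap ⊤

end BanachDefs

section HilbertDefs

variable {H : Type*} [NormedAddCommGroup H] [InnerProductSpace ℂ H] [CompleteSpace H]

/-- A densely defined closed operator is quasinormal if `T T* T = T* T T`. -/
def LinearPMap.IsQuasinormal (T : H →ₗ.[ℂ] H) : Prop :=
  T.IsClosed ∧ Dense (T.domain : Set H) ∧
    T.pComp (T.adjoint.pComp T) = T.adjoint.pComp (T.pComp T)

/-- A densely defined closed operator is normal if `T* T = T T*` (an equality of unbounded
operators, domains included). -/
def LinearPMap.IsNormal (T : H →ₗ.[ℂ] H) : Prop :=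
  T.IsClosed ∧ Dense (T.domain : Set H) ∧ T.adjoint.pComp T = T.pComp T.adjoint

/-- A symmetric (not necessarily densely defined) operator. -/
def LinearPMap.IsSymm (T : H →ₗ.[ℂ] H) : Prop :=
  ∀ x y : T.domain, inner ℂ (T x) (y : H) = (inner ℂ (x : H) (T y) : ℂ)

/-- A paranormal operator: `‖Tx‖² ≤ ‖T²x‖ ‖x‖` for every `x ∈ D(T²)`. -/
def LinearPMap.IsParanormal (T : H →ₗ.[ℂ] H) : Prop :=
  ∀ (x : H) (hx : x ∈ T.domain) (hTx : T ⟨x, hx⟩ ∈ T.domain),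
    ‖T ⟨x, hx⟩‖ ^ 2 ≤ ‖T ⟨T ⟨x, hx⟩, hTx⟩‖ * ‖x‖

end HilbertDefs

end

section Aux

namespace LinearPMap
variable {H : Type*} [NormedAddCommGroup H] [NormedSpace ℂ H]

theorem apply_congr (T : H →ₗ.[ℂ] H) {x y : T.domain} (h : (x : H) = (y : H)) : T x = T y :=
  congrArg _ (Subtype.ext h)

theorem pComp_mem_iff {g f : H →ₗ.[ℂ] H} {x : H} :
    x ∈ (g.pComp f).domain ↔ ∃ hx : x ∈ f.domain, f ⟨x, hx⟩ ∈ g.domain := by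
  constructor
  · rintro ⟨y, hy, rfl⟩
    exact ⟨y.2, hy⟩
  · rintro ⟨hx, hfx⟩
    exact ⟨⟨x, hx⟩, hfx, rfl⟩

theorem pComp_apply {g f : H →ₗ.[ℂ] H} {x : H} (hx : x ∈ f.domain)
    (hfx : f ⟨x, hx⟩ ∈ g.domain) (hx' : x ∈ (g.pComp f).domain) :
    (g.pComp f) ⟨x, hx'⟩ = g ⟨f ⟨x, hx⟩, hfx⟩ := by
  have hz : (⟨⟨x, hx⟩, hfx⟩ : (g.domain.comap f.toFun)) =
      (Submodule.equivMapOfInjective f.domain.subtype (Submodule.injective_subtype _)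
      (g.domain.comap f.toFun)).symm ⟨x, hx'⟩ := by
    rw [LinearEquiv.eq_symm_apply]
    apply Subtype.ext
    rfl
  exact g.apply_congr (congrArg (fun (z : g.domain.comap f.toFun) => f.toFun z.val) hz.symm)

theorem exists_clm_comp [CompleteSpace H] (T : H →ₗ.[ℂ] H) (hT : T.IsClosed)
    (R : H →L[ℂ] H) (h : ∀ y, R y ∈ T.domain) :
    ∃ K : H →L[ℂ] H, ∀ y, K y = T ⟨R y, h y⟩ := by
  set L : H →ₗ[ℂ] H := T.toFun ∘ₗ ((R : H →ₗ[ℂ] H).codRestrict T.domain h) with hLdef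
  have hL : ∀ y, L y = T ⟨R y, h y⟩ := fun y => rfl
  have hgr : _root_.IsClosed (L.graph : Set (H × H)) := by
    have hset : (L.graph : Set (H × H)) =
        (fun p : H × H => (R p.1, p.2)) ⁻¹' (T.graph : Set (H × H)) := by
      ext p
      simp only [Set.mem_preimage, SetLike.mem_coe, LinearMap.mem_graph_iff,
        LinearPMap.mem_graph_iff]
      constructor
      · intro hp
        exact ⟨⟨R p.1, h p.1⟩, rfl, ((hL p.1).symm.trans hp.symm)⟩
      · rintro ⟨y, hy1, hy2⟩
        rw [hL p.1, ← hy2]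
        exact (T.apply_congr (x := ⟨R p.1, h p.1⟩) (y := y) hy1.symm).symm
    rw [hset]
    exact hT.preimage ((R.continuous.comp continuous_fst).prodMk continuous_snd)
  exact ⟨⟨L, L.continuous_of_isClosed_graph hgr⟩, hL⟩

theorem exists_clm_inverse [CompleteSpace H] (T : H →ₗ.[ℂ] H) (hT : T.IsClosed)
    (hinj : ∀ x : T.domain, T x = 0 → (x : H) = 0)
    (hsurj : ∀ y : H, ∃ x : T.domain, T x = y) :
    ∃ G : H →L[ℂ] H, (∀ y, ∃ h : G y ∈ T.domain, T ⟨G y, h⟩ = y) ∧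
      (∀ x : T.domain, G (T x) = x) := by
  have hbij : Function.Bijective T.toFun := by
    constructor
    · intro a b hab
      have : T (a - b) = 0 := by
        show T.toFun (a - b) = 0
        rw [show T.toFun (a - b) = T.toFun a - T.toFun b from map_sub _ a b, hab, sub_self]
      have h2 := hinj _ this
      rw [Submodule.coe_sub, sub_eq_zero] at h2
      exact Subtype.ext h2
    · exact hsurj
  let e := LinearEquiv.ofBijective T.toFun hbij
  let G0 : H →ₗ[ℂ] H := T.domain.subtype ∘ₗ (e.symm : H →ₗ[ℂ] T.domain)
  have hG0 : ∀ y, G0 y = ((e.symm y : T.domain) : H) := fun y => rfl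
  have hTe : ∀ z : T.domain, T z = e z := fun z => rfl
  have hgr : _root_.IsClosed (G0.graph : Set (H × H)) := by
    have hset : (G0.graph : Set (H × H)) = Prod.swap ⁻¹' (T.graph : Set (H × H)) := by
      ext p
      simp only [Set.mem_preimage, SetLike.mem_coe, LinearMap.mem_graph_iff,
        LinearPMap.mem_graph_iff, Prod.fst_swap, Prod.snd_swap]
      constructor
      · intro hp
        refine ⟨e.symm p.1, hp.symm, ?_⟩
        rw [hTe]
        exact e.apply_symm_apply p.1
      · rintro ⟨z, hz1, hz2⟩
        have : z = e.symm p.1 := by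
          rw [LinearEquiv.eq_symm_apply, ← hTe, hz2]
        rw [hG0, ← this, hz1]
    rw [hset]
    exact hT.preimage continuous_swap
  refine ⟨⟨G0, G0.continuous_of_isClosed_graph hgr⟩, fun y => ?_, fun x => ?_⟩
  · refine ⟨(e.symm y).2, ?_⟩
    exact (T.apply_congr (y := e.symm y) rfl).trans
      (by rw [hTe]; exact e.apply_symm_apply y)
  · show G0 (T x) = x
    rw [hG0, hTe, e.symm_apply_apply]

theorem subConst_apply (A : H →ₗ.[ℂ] H) (μ : ℂ) (x : A.domain) :
    (A.subConst μ) x = A x - μ • (x : H) :=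
  rfl

theorem pComp_mem_fst {g f : H →ₗ.[ℂ] H} {x : H} (h : x ∈ (g.pComp f).domain) :
    x ∈ f.domain := (pComp_mem_iff.mp h).choose

theorem pComp_mem_snd {g f : H →ₗ.[ℂ] H} {x : H} (h : x ∈ (g.pComp f).domain) :
    f ⟨x, pComp_mem_fst h⟩ ∈ g.domain := (pComp_mem_iff.mp h).choose_spec

theorem pComp_apply'' {g f : H →ₗ.[ℂ] H} {x : H} (h : x ∈ (g.pComp f).domain) :
    (g.pComp f) ⟨x, h⟩ = g ⟨f ⟨x, pComp_mem_fst h⟩, pComp_mem_snd h⟩ :=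
  pComp_apply (pComp_mem_fst h) (pComp_mem_snd h) h

theorem apply_eq_of_eq {f g : H →ₗ.[ℂ] H} (h : f = g) {x : H} (hxf : x ∈ f.domain) :
    f ⟨x, hxf⟩ = g ⟨x, h ▸ hxf⟩ := by subst h; rfl

theorem zero_elt_apply (T : H →ₗ.[ℂ] H) (h : (0 : H) ∈ T.domain) : T ⟨0, h⟩ = 0 := by
  have h2 : T ⟨0, h⟩ = T 0 := T.apply_congr rfl
  rw [h2]
  exact T.toFun.map_zero

end LinearPMap

variable {H : Type*} [NormedAddCommGroup H] [NormedSpace ℂ H]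

/-- Data witnessing that `T - μ` is boundedly invertible with inverse `Rc`. -/
abbrev BddInvData (T : H →ₗ.[ℂ] H) (μ : ℂ) (Rc : H →L[ℂ] H) : Prop :=
  (∀ y : H, ∃ hy : Rc y ∈ T.domain, T ⟨Rc y, hy⟩ - μ • Rc y = y) ∧
  (∀ x : T.domain, Rc (T x - μ • (x : H)) = x)

theorem isBddInvertible_subConst_iff (T : H →ₗ.[ℂ] H) (μ : ℂ) :
    (T.subConst μ).IsBddInvertible ↔ ∃ Rc : H →L[ℂ] H, BddInvData T μ Rc := by
  constructor
  · rintro ⟨Rc, h1, h2⟩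
    exact ⟨Rc, fun y => h1 y, fun x => h2 x⟩
  · rintro ⟨Rc, h1, h2⟩
    exact ⟨Rc, fun y => h1 y, fun x => h2 x⟩

theorem BddInvData.mem {T : H →ₗ.[ℂ] H} {μ : ℂ} {Rc : H →L[ℂ] H}
    (h : BddInvData T μ Rc) (y : H) : Rc y ∈ T.domain := (h.1 y).choose

theorem BddInvData.eq {T : H →ₗ.[ℂ] H} {μ : ℂ} {Rc : H →L[ℂ] H}
    (h : BddInvData T μ Rc) (y : H) : T ⟨Rc y, h.mem y⟩ - μ • Rc y = y := (h.1 y).choose_spec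

end Aux

section AuxHilbert

open LinearPMap

variable {H : Type*} [NormedAddCommGroup H] [InnerProductSpace ℂ H] [CompleteSpace H]

theorem exists_orthogonal (V : Submodule ℂ H) (hV : IsClosed (V : Set H)) (hne : V ≠ ⊤) :
    ∃ y : H, y ≠ 0 ∧ ∀ v ∈ V, (inner ℂ v y : ℂ) = 0 := by
  haveI : CompleteSpace V := hV.completeSpace_coe
  have h1 : Vᗮ ≠ ⊥ := fun h => hne (Submodule.orthogonal_eq_bot_iff.mp h)
  obtain ⟨y, hyV, hy0⟩ := Submodule.exists_mem_ne_zero_of_ne_bot h1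
  exact ⟨y, hy0, fun v hv => (Submodule.mem_orthogonal _ y).mp hyV v hv⟩

theorem dense_inner_zero {s : Set H} (hs : Dense s) {y : H}
    (h : ∀ v ∈ s, (inner ℂ v y : ℂ) = 0) : y = 0 := by
  have hcont : Continuous fun z : H => (inner ℂ z y : ℂ) :=
    continuous_id.inner continuous_const
  have hall : ∀ z : H, (inner ℂ z y : ℂ) = 0 := by
    have := Continuous.ext_on hs hcont continuous_const (fun v hv => h v hv)
    exact fun z => congrFun this z
  simpa [inner_self_eq_zero] using hall y

/-- For a normal operator (in the sense of the commuting `pComp` equation) that is surjective,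
the kernel is trivial. -/
theorem normal_ker_triv (T : H →ₗ.[ℂ] H) (hd : Dense (T.domain : Set H))
    (hn : T.adjoint.pComp T = T.pComp T.adjoint)
    (hsurj : ∀ y : H, ∃ x : T.domain, T x = y) :
    ∀ x : T.domain, T x = 0 → (x : H) = 0 := by
  intro x hx
  have hTx : T ⟨(x : H), x.2⟩ = 0 := by
    rw [T.apply_congr (y := x) rfl]; exact hx
  have hx1 : (x : H) ∈ (T.adjoint.pComp T).domain :=
    pComp_mem_iff.mpr ⟨x.2, by rw [hTx]; exact (T.adjoint.domain).zero_mem⟩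
  have hx2 : (x : H) ∈ (T.pComp T.adjoint).domain := hn ▸ hx1
  have hxd : (x : H) ∈ T.adjoint.domain := pComp_mem_fst hx2
  have hTd : T.adjoint ⟨(x : H), hxd⟩ ∈ T.domain := pComp_mem_snd hx2
  -- value of T†.pComp T at x is 0
  have hv1 : (T.adjoint.pComp T) ⟨(x : H), hx1⟩ = 0 := by
    rw [pComp_apply x.2 (by rw [hTx]; exact (T.adjoint.domain).zero_mem) hx1]
    rw [T.adjoint.apply_congr (y := ⟨0, (T.adjoint.domain).zero_mem⟩) hTx]
    exact T.adjoint.zero_elt_apply _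
  have hv2 : (T.pComp T.adjoint) ⟨(x : H), hx2⟩ = 0 := by
    rw [← LinearPMap.apply_eq_of_eq hn hx1]
    exact hv1
  have hTT : T ⟨T.adjoint ⟨(x : H), hxd⟩, hTd⟩ = 0 := by
    rw [← pComp_apply hxd hTd hx2]
    exact hv2
  have hfa := LinearPMap.adjoint_isFormalAdjoint hd
  -- T† x = 0
  have hadj0 : T.adjoint ⟨(x : H), hxd⟩ = 0 := by
    have h2 := hfa ⟨(x : H), hxd⟩ ⟨T.adjoint ⟨(x : H), hxd⟩, hTd⟩
    rw [hTT, inner_zero_right] at h2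
    exact inner_self_eq_zero.mp h2
  -- x ⊥ range T = H
  have hperp : ∀ z : H, (inner ℂ (x : H) z : ℂ) = 0 := by
    intro z
    obtain ⟨u, hu⟩ := hsurj z
    have h2 := hfa ⟨(x : H), hxd⟩ u
    rw [hadj0, inner_zero_left, hu] at h2
    exact h2.symm
  exact inner_self_eq_zero.mp (hperp (x : H))

end AuxHilbert

section Main

open LinearPMap

variable {H : Type*} [NormedAddCommGroup H] [InnerProductSpace ℂ H] [CompleteSpace H]

theorem key_zero (A B : H →ₗ.[ℂ] H) (hdA : Dense (A.domain : Set H))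
    (hAc : A.IsClosed) (hBc : B.IsClosed)
    (hnA : A.adjoint.pComp A = A.pComp A.adjoint)
    (R : H →L[ℂ] H) (hR : BddInvData (A.pComp B) 0 R)
    (S : H →L[ℂ] H) (μ : ℂ) (hS : BddInvData (B.pComp A) μ S) :
    ∃ N : H →L[ℂ] H, BddInvData (B.pComp A) 0 N := by
  have hAsurj : ∀ y : H, ∃ x : A.domain, A x = y := by
    intro y
    have h1 := hR.eq y
    rw [zero_smul, sub_zero] at h1
    rw [pComp_apply'' (hR.mem y)] at h1
    exact ⟨_, h1⟩
  have hAinj := normal_ker_triv A hdA hnA hAsurj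
  have hAinj2 : ∀ x1 x2 : A.domain, A x1 = A x2 → (x1 : H) = (x2 : H) := by
    intro x1 x2 h12
    have h0 : A (x1 - x2) = 0 := by
      rw [A.map_sub, h12, sub_self]
    have h3 := hAinj _ h0
    rwa [Submodule.coe_sub, sub_eq_zero] at h3
  obtain ⟨GA, hGA1, hGA2⟩ := A.exists_clm_inverse hAc hAinj hAsurj
  have hBinj : ∀ x : B.domain, B x = 0 → (x : H) = 0 := by
    intro x hx
    have hBx : B ⟨(x : H), x.2⟩ = 0 := by rw [B.apply_congr (y := x) rfl]; exact hx
    have hmem : (x : H) ∈ (A.pComp B).domain :=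
      pComp_mem_iff.mpr ⟨x.2, by rw [hBx]; exact A.domain.zero_mem⟩
    have h2 := hR.2 ⟨(x : H), hmem⟩
    rw [zero_smul, sub_zero] at h2
    rw [pComp_apply'' hmem] at h2
    rw [A.apply_congr (y := ⟨0, A.domain.zero_mem⟩) hBx] at h2
    rw [A.zero_elt_apply, _root_.map_zero] at h2
    exact h2.symm
  have hranB : ∀ v : A.domain, ∃ hb : R (A v) ∈ B.domain, B ⟨R (A v), hb⟩ = (v : H) := by
    intro v
    have h1 := hR.eq (A v)
    rw [zero_smul, sub_zero, pComp_apply'' (hR.mem (A v))] at h1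
    exact ⟨pComp_mem_fst (hR.mem (A v)),
      hAinj2 ⟨_, pComp_mem_snd (hR.mem (A v))⟩ v h1⟩
  have hBsurj : ∀ y : H, ∃ x : B.domain, B x = y := by
    intro y
    have h1 := hS.eq y
    rw [pComp_apply'' (hS.mem y)] at h1
    obtain ⟨hb, hb2⟩ := hranB ⟨S y, pComp_mem_fst (hS.mem y)⟩
    refine ⟨(⟨A ⟨S y, pComp_mem_fst (hS.mem y)⟩, pComp_mem_snd (hS.mem y)⟩ : B.domain)
      - μ • ⟨R (A ⟨S y, pComp_mem_fst (hS.mem y)⟩), hb⟩, ?_⟩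
    rw [B.map_sub, B.map_smul, hb2]
    have h3 := eq_add_of_sub_eq h1
    rw [h3]
    exact add_sub_cancel_right _ _
  obtain ⟨GB, hGB1, hGB2⟩ := B.exists_clm_inverse hBc hBinj hBsurj
  refine ⟨GA.comp GB, fun y => ?_, fun x => ?_⟩
  · obtain ⟨hb, hb2⟩ := hGB1 y
    obtain ⟨ha, ha2⟩ := hGA1 (GB y)
    have hmem : GA (GB y) ∈ (B.pComp A).domain :=
      pComp_mem_iff.mpr ⟨ha, by rw [ha2]; exact hb⟩
    refine ⟨hmem, ?_⟩
    rw [zero_smul, sub_zero]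
    calc (B.pComp A) ⟨(GA.comp GB) y, hmem⟩
        = B ⟨A ⟨GA (GB y), pComp_mem_fst hmem⟩, pComp_mem_snd hmem⟩ := pComp_apply'' hmem
      _ = B ⟨GB y, hb⟩ := B.apply_congr ha2
      _ = y := hb2
  · rw [zero_smul, sub_zero]
    have hx : (x : H) ∈ (B.pComp A).domain := x.2
    have h1 : (B.pComp A) x = B ⟨A ⟨(x : H), pComp_mem_fst hx⟩, pComp_mem_snd hx⟩ := by
      rw [← pComp_apply'' hx]
    rw [h1]
    show GA (GB (B ⟨A ⟨(x : H), pComp_mem_fst hx⟩, pComp_mem_snd hx⟩)) = (x : H)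
    rw [hGB2 ⟨A ⟨(x : H), pComp_mem_fst hx⟩, pComp_mem_snd hx⟩]
    exact hGA2 ⟨(x : H), pComp_mem_fst hx⟩

set_option maxHeartbeats 1000000 in
theorem key_nonzero (A B : H →ₗ.[ℂ] H) (hdA : Dense (A.domain : Set H))
    (hAc : A.IsClosed) (hBc : B.IsClosed) (lam μ : ℂ) (hlam : lam ≠ 0)
    (R : H →L[ℂ] H) (hR : BddInvData (A.pComp B) lam R)
    (S : H →L[ℂ] H) (hS : BddInvData (B.pComp A) μ S) :
    ∃ N : H →L[ℂ] H, BddInvData (B.pComp A) lam N := by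
  by_cases hlm : lam = μ
  · exact ⟨S, hlm ▸ hS⟩
  have hml : μ - lam ≠ 0 := sub_ne_zero.mpr (Ne.symm hlm)
  have hlm' : lam - μ ≠ 0 := sub_ne_zero.mpr hlm
  obtain ⟨c, hc0, hmc⟩ : ∃ c : ℂ, c ≠ 0 ∧ (μ - lam) * c = -1 :=
    ⟨(lam - μ)⁻¹, inv_ne_zero hlm', by field_simp; ring⟩
  have hRmemB : ∀ y, R y ∈ B.domain := fun y => pComp_mem_fst (hR.mem y)
  have hSmemA : ∀ y, S y ∈ A.domain := fun y => pComp_mem_fst (hS.mem y)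
  obtain ⟨K, hK⟩ := B.exists_clm_comp hBc R hRmemB
  obtain ⟨K', hK'⟩ := A.exists_clm_comp hAc S hSmemA
  set Sc : H →L[ℂ] H := S - c • ContinuousLinearMap.id ℂ H with hScdef
  have hSc : ∀ x : H, Sc x = S x - c • x := fun x => rfl
  -- fundamental identity on the domain of BA
  have hid : ∀ x : (B.pComp A).domain,
      (B.pComp A) x - lam • (x : H)
        = (μ - lam) • Sc ((B.pComp A) x - μ • (x : H)) := by
    intro x
    rw [hSc, hS.2 x]
    match_scalars <;>
    first
      | ring1
      | linear_combination hmc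
      | linear_combination -hmc
      | linear_combination μ * hmc
      | linear_combination -μ * hmc
      | linear_combination lam * hmc
      | linear_combination -lam * hmc
      | linear_combination c * hmc
      | linear_combination -c * hmc
      | linear_combination (μ * c) * hmc
      | linear_combination (-(μ * c)) * hmc
      | linear_combination (lam * c) * hmc
      | linear_combination (-(lam * c)) * hmc
      | linear_combination (μ - lam) * hmc
      | linear_combination (lam - μ) * hmc
  -- identity for elements in the range of S
  have hid2 : ∀ z : H, (B.pComp A) ⟨S z, hS.mem z⟩ - lam • S z = (μ - lam) • Sc z := by
    intro z
    have h3 := eq_add_of_sub_eq (hS.eq z)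
    rw [h3, hSc]
    match_scalars <;>
    first
      | ring1
      | linear_combination hmc
      | linear_combination -hmc
      | linear_combination μ * hmc
      | linear_combination -μ * hmc
      | linear_combination lam * hmc
      | linear_combination -lam * hmc
      | linear_combination c * hmc
      | linear_combination -c * hmc
      | linear_combination (μ * c) * hmc
      | linear_combination (-(μ * c)) * hmc
      | linear_combination (lam * c) * hmc
      | linear_combination (-(lam * c)) * hmc
      | linear_combination (μ - lam) * hmc
      | linear_combination (lam - μ) * hmc
  -- `Sc` is bounded below
  have hbb : ∃ k : ℝ, 0 < k ∧ ∀ x : H, k * ‖x‖ ≤ ‖Sc x‖ := by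
    by_contra hcon
    push_neg at hcon
    set D : ℝ := ‖lam‖ * (‖c‖ + ‖S‖) + ‖S‖ * ‖μ - lam‖ + ‖K‖ * ‖K'‖ * ‖μ - lam‖ with hD
    have hD0 : 0 ≤ D := by positivity
    have hQ : (0 : ℝ) < ‖lam‖ * (‖c‖ * ‖c‖) := by
      have h1 : ‖lam‖ ≠ 0 := fun h => hlam (norm_eq_zero.mp h)
      have h2 : ‖c‖ ≠ 0 := fun h => hc0 (norm_eq_zero.mp h)
      have := norm_nonneg lam
      have := norm_nonneg c
      positivity
    obtain ⟨x0, hx0⟩ := hcon (‖lam‖ * (‖c‖ * ‖c‖) / (D + 1)) (by positivity)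
    have hx0pos : 0 < ‖x0‖ := by
      rcases eq_or_lt_of_le (norm_nonneg x0) with h | h
      · exfalso
        have hz : x0 = 0 := norm_eq_zero.mp h.symm
        rw [hz] at hx0
        simp only [_root_.map_zero, norm_zero, mul_zero] at hx0
        exact absurd hx0 (lt_irrefl 0)
      · exact h
    have hsx : S x0 = c • x0 + Sc x0 := by rw [hSc]; abel
    have hη : x0 + (μ - lam) • S x0 = (μ - lam) • Sc x0 := by
      rw [hsx]
      match_scalars <;>
      first
      | ring1
      | linear_combination hmc
      | linear_combination -hmc
      | linear_combination μ * hmc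
      | linear_combination -μ * hmc
      | linear_combination lam * hmc
      | linear_combination -lam * hmc
      | linear_combination c * hmc
      | linear_combination -c * hmc
      | linear_combination (μ * c) * hmc
      | linear_combination (-(μ * c)) * hmc
      | linear_combination (lam * c) * hmc
      | linear_combination (-(lam * c)) * hmc
      | linear_combination (μ - lam) * hmc
      | linear_combination (lam - μ) * hmc
    have hw2 : S (S x0) = (c * c) • x0 + (c • Sc x0 + S (Sc x0)) := by
      calc S (S x0) = S (c • x0 + Sc x0) := by rw [← hsx]
        _ = c • S x0 + S (Sc x0) := by rw [_root_.map_add, _root_.map_smul]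
        _ = c • (c • x0 + Sc x0) + S (Sc x0) := by rw [hsx]
        _ = (c * c) • x0 + (c • Sc x0 + S (Sc x0)) := by
            rw [smul_add, smul_smul]; abel
    have hδval : (B.pComp A) ⟨S (S x0), hS.mem (S x0)⟩ - lam • S (S x0)
        = S (x0 + (μ - lam) • S x0) := by
      rw [hid2 (S x0), _root_.map_add, _root_.map_smul, hSc]
      match_scalars <;>
      first
      | ring1
      | linear_combination hmc
      | linear_combination -hmc
      | linear_combination μ * hmc
      | linear_combination -μ * hmc
      | linear_combination lam * hmc
      | linear_combination -lam * hmc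
      | linear_combination c * hmc
      | linear_combination -c * hmc
      | linear_combination (μ * c) * hmc
      | linear_combination (-(μ * c)) * hmc
      | linear_combination (lam * c) * hmc
      | linear_combination (-(lam * c)) * hmc
      | linear_combination (μ - lam) * hmc
      | linear_combination (lam - μ) * hmc
    have hBval2 : (B.pComp A) ⟨S (S x0), hS.mem (S x0)⟩
        = lam • S (S x0) + S (x0 + (μ - lam) • S x0) := by
      have := eq_add_of_sub_eq hδval
      rw [this]; abel
    have hwA : S (S x0) ∈ A.domain := hSmemA (S x0)
    have hδA : S (x0 + (μ - lam) • S x0) ∈ A.domain := hSmemA _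
    have hBvalA : (B.pComp A) ⟨S (S x0), hS.mem (S x0)⟩ ∈ A.domain := by
      rw [hBval2]
      exact A.domain.add_mem (A.domain.smul_mem _ hwA) hδA
    have huB : A ⟨S (S x0), hwA⟩ ∈ B.domain := pComp_mem_snd (hS.mem (S x0))
    have hBu : B ⟨A ⟨S (S x0), hwA⟩, huB⟩ = (B.pComp A) ⟨S (S x0), hS.mem (S x0)⟩ :=
      (pComp_apply'' (hS.mem (S x0))).symm
    have huAB : A ⟨S (S x0), hwA⟩ ∈ (A.pComp B).domain :=
      pComp_mem_iff.mpr ⟨huB, by rw [hBu]; exact hBvalA⟩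
    have hABu : (A.pComp B) ⟨A ⟨S (S x0), hwA⟩, huAB⟩
        = lam • A ⟨S (S x0), hwA⟩ + K' (x0 + (μ - lam) • S x0) := by
      rw [pComp_apply'' huAB]
      have e1 : A ⟨B ⟨A ⟨S (S x0), hwA⟩, pComp_mem_fst huAB⟩, pComp_mem_snd huAB⟩
          = A (lam • (⟨S (S x0), hwA⟩ : A.domain)
              + ⟨S (x0 + (μ - lam) • S x0), hδA⟩) := by
        apply A.apply_congr
        show B ⟨A ⟨S (S x0), hwA⟩, pComp_mem_fst huAB⟩
            = lam • S (S x0) + S (x0 + (μ - lam) • S x0)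
        exact hBu.trans hBval2
      rw [e1, A.map_add, A.map_smul]
      congr 1
      exact (hK' _).symm
    have hRu : R (K' (x0 + (μ - lam) • S x0)) = A ⟨S (S x0), hwA⟩ := by
      have h11 := hR.2 ⟨A ⟨S (S x0), hwA⟩, huAB⟩
      rw [hABu, add_sub_cancel_left] at h11
      exact h11
    have hfinal : (B.pComp A) ⟨S (S x0), hS.mem (S x0)⟩
        = K (K' (x0 + (μ - lam) • S x0)) := by
      rw [hK]
      refine (pComp_apply'' (hS.mem (S x0))).trans ?_
      exact B.apply_congr (y := ⟨R (K' (x0 + (μ - lam) • S x0)), hRmemB _⟩) hRu.symm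
    -- norm estimates
    have n0 : ‖x0 + (μ - lam) • S x0‖ = ‖μ - lam‖ * ‖Sc x0‖ := by
      rw [hη, norm_smul]
    have n1 : ‖S (x0 + (μ - lam) • S x0)‖ ≤ ‖S‖ * (‖μ - lam‖ * ‖Sc x0‖) := by
      have := S.le_opNorm (x0 + (μ - lam) • S x0)
      rwa [n0] at this
    have n2 : ‖(B.pComp A) ⟨S (S x0), hS.mem (S x0)⟩‖
        ≤ ‖K‖ * (‖K'‖ * (‖μ - lam‖ * ‖Sc x0‖)) := by
      rw [hfinal]
      calc ‖K (K' (x0 + (μ - lam) • S x0))‖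
          ≤ ‖K‖ * ‖K' (x0 + (μ - lam) • S x0)‖ := K.le_opNorm _
        _ ≤ ‖K‖ * (‖K'‖ * (‖μ - lam‖ * ‖Sc x0‖)) := by
            refine mul_le_mul_of_nonneg_left ?_ (norm_nonneg _)
            have := K'.le_opNorm (x0 + (μ - lam) • S x0)
            rw [n0] at this
            exact this
    have n3 : ‖c‖ * ‖c‖ * ‖x0‖ ≤ ‖S (S x0)‖ + (‖c‖ + ‖S‖) * ‖Sc x0‖ := by
      have e2 : (c * c) • x0 = S (S x0) - (c • Sc x0 + S (Sc x0)) := by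
        rw [hw2]; abel
      have e3 : ‖(c * c) • x0‖ = ‖c‖ * ‖c‖ * ‖x0‖ := by
        rw [norm_smul, norm_mul]
      have e4 : ‖c • Sc x0 + S (Sc x0)‖ ≤ (‖c‖ + ‖S‖) * ‖Sc x0‖ := by
        have h21 := norm_add_le (c • Sc x0) (S (Sc x0))
        have h22 : ‖c • Sc x0‖ = ‖c‖ * ‖Sc x0‖ := norm_smul _ _
        have h23 := S.le_opNorm (Sc x0)
        nlinarith [norm_nonneg (Sc x0)]
      calc ‖c‖ * ‖c‖ * ‖x0‖ = ‖(c * c) • x0‖ := e3.symm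
        _ = ‖S (S x0) - (c • Sc x0 + S (Sc x0))‖ := by rw [e2]
        _ ≤ ‖S (S x0)‖ + ‖c • Sc x0 + S (Sc x0)‖ := norm_sub_le _ _
        _ ≤ ‖S (S x0)‖ + (‖c‖ + ‖S‖) * ‖Sc x0‖ := by linarith
    have n4 : ‖lam‖ * ‖S (S x0)‖
        ≤ ‖(B.pComp A) ⟨S (S x0), hS.mem (S x0)⟩‖ + ‖S (x0 + (μ - lam) • S x0)‖ := by
      have e5 : lam • S (S x0) = (B.pComp A) ⟨S (S x0), hS.mem (S x0)⟩
          - S (x0 + (μ - lam) • S x0) := by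
        rw [hBval2]; abel
      calc ‖lam‖ * ‖S (S x0)‖ = ‖lam • S (S x0)‖ := (norm_smul _ _).symm
        _ = ‖(B.pComp A) ⟨S (S x0), hS.mem (S x0)⟩ - S (x0 + (μ - lam) • S x0)‖ := by
            rw [e5]
        _ ≤ _ := norm_sub_le _ _
    -- contradiction
    have h20 : ‖Sc x0‖ * (D + 1) < ‖lam‖ * (‖c‖ * ‖c‖) * ‖x0‖ := by
      have hpos : (0 : ℝ) < D + 1 := by linarith
      have h21 := (lt_div_iff₀ hpos).mp (by
        rw [div_mul_eq_mul_div] at hx0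
        exact hx0)
      linarith
    have hchain : ‖lam‖ * (‖c‖ * ‖c‖) * ‖x0‖ ≤ D * ‖Sc x0‖ := by
      have m1 := mul_le_mul_of_nonneg_left n3 (norm_nonneg lam)
      rw [hD]
      nlinarith [m1, n4, n1, n2]
    have ha := norm_nonneg (Sc x0)
    have hfin : ‖Sc x0‖ * (D + 1) < D * ‖Sc x0‖ := lt_of_lt_of_le h20 hchain
    have hexp : ‖Sc x0‖ * (D + 1) = D * ‖Sc x0‖ + ‖Sc x0‖ := by ring
    linarith only [hfin, hexp, ha]
  -- `Sc` is injective with closed range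
  obtain ⟨k, hk0, hkb⟩ := hbb
  have hScinj : ∀ m : H, Sc m = 0 → m = 0 := by
    intro m hm
    have := hkb m
    rw [hm, norm_zero] at this
    have : ‖m‖ ≤ 0 := by nlinarith
    exact norm_le_zero_iff.mp this
  have hclosed : IsClosed (Set.range Sc) := by
    have hb : ∀ x : H, ‖x‖ ≤ (⟨k⁻¹, by positivity⟩ : NNReal) * ‖Sc x‖ := by
      intro x
      have := hkb x
      have hk' : (0 : ℝ) < k := hk0
      calc (‖x‖ : ℝ) = k⁻¹ * (k * ‖x‖) := by field_simp
        _ ≤ k⁻¹ * ‖Sc x‖ := by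
            refine mul_le_mul_of_nonneg_left this (by positivity)
        _ = _ := by norm_num
    exact (Sc.antilipschitz_of_bound hb).isClosed_range Sc.uniformContinuous
  have hrange : Sc.range = ⊤ := by
    by_contra hne
    have hcl : IsClosed ((Sc.range : Submodule ℂ H) : Set H) := by
      have : ((Sc.range : Submodule ℂ H) : Set H) = Set.range Sc := by
        ext z
        simp [LinearMap.mem_range]
      rw [this]
      exact hclosed
    obtain ⟨y, hy0, hyp⟩ := exists_orthogonal Sc.range hcl hne
    apply hy0
    apply dense_inner_zero hdA
    intro v hv
    -- construct a preimage of v under BA - lam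
    have h1 := hR.eq (A ⟨v, hv⟩)
    rw [pComp_apply'' (hR.mem (A ⟨v, hv⟩))] at h1
    have hA1 := eq_add_of_sub_eq h1
    -- the element m
    have hrvB : R (A ⟨v, hv⟩) ∈ B.domain := pComp_mem_fst (hR.mem (A ⟨v, hv⟩))
    have hBrvA : B ⟨R (A ⟨v, hv⟩), hrvB⟩ ∈ A.domain := pComp_mem_snd (hR.mem (A ⟨v, hv⟩))
    set mE : A.domain := lam⁻¹ • ((⟨B ⟨R (A ⟨v, hv⟩), hrvB⟩, hBrvA⟩ : A.domain) - ⟨v, hv⟩)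
      with hmE
    have hAm : A mE = R (A ⟨v, hv⟩) := by
      rw [hmE, A.map_smul, A.map_sub, hA1]
      rw [add_sub_cancel_left, smul_smul, inv_mul_cancel₀ hlam, one_smul]
    have hmBA : (mE : H) ∈ (B.pComp A).domain := by
      apply pComp_mem_iff.mpr
      refine ⟨mE.2, ?_⟩
      have : A ⟨(mE : H), mE.2⟩ = A mE := A.apply_congr rfl
      rw [this, hAm]
      exact hrvB
    have hval : (B.pComp A) ⟨(mE : H), hmBA⟩ - lam • (mE : H) = v := by
      rw [pComp_apply'' hmBA]
      have e6 : B ⟨A ⟨(mE : H), pComp_mem_fst hmBA⟩, pComp_mem_snd hmBA⟩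
          = B ⟨R (A ⟨v, hv⟩), hrvB⟩ := by
        apply B.apply_congr
        show A ⟨(mE : H), pComp_mem_fst hmBA⟩ = R (A ⟨v, hv⟩)
        have : A ⟨(mE : H), pComp_mem_fst hmBA⟩ = A mE := A.apply_congr rfl
        rw [this, hAm]
      rw [e6, hmE]
      rw [Submodule.coe_smul, Submodule.coe_sub]
      rw [smul_smul, mul_inv_cancel₀ hlam, one_smul]
      exact sub_sub_cancel _ _
    -- v is in the "range line" of Sc
    have h30 := (hid ⟨(mE : H), hmBA⟩).symm.trans hval
    rw [← h30, inner_smul_left, hyp (Sc _) (LinearMap.mem_range.mpr ⟨_, rfl⟩), mul_zero]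
  -- build the bounded inverse
  have hker : Sc.ker = ⊥ :=
    LinearMap.ker_eq_bot'.mpr (fun m hm => hScinj m hm)
  set EqS := ContinuousLinearEquiv.ofBijective Sc hker hrange with hEqS
  have hW1 : ∀ z : H, Sc (EqS.symm z) = z := fun z =>
    ContinuousLinearEquiv.ofBijective_apply_symm_apply Sc hker hrange z
  have hW2 : ∀ z : H, EqS.symm (Sc z) = z := fun z =>
    ContinuousLinearEquiv.ofBijective_symm_apply_apply Sc hker hrange z
  refine ⟨S.comp ((μ - lam)⁻¹ • (EqS.symm : H →L[ℂ] H)), fun y => ?_, fun x => ?_⟩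
  · refine ⟨hS.mem ((μ - lam)⁻¹ • EqS.symm y), ?_⟩
    have h40 := hid2 ((μ - lam)⁻¹ • EqS.symm y)
    have h42 : (μ - lam) • Sc ((μ - lam)⁻¹ • EqS.symm y) = y := by
      rw [_root_.map_smul, hW1, smul_smul, mul_inv_cancel₀ hml, one_smul]
    exact h40.trans h42
  · have h41 := hid x
    show S ((μ - lam)⁻¹ • EqS.symm ((B.pComp A) x - lam • (x : H))) = (x : H)
    rw [h41]
    rw [show EqS.symm ((μ - lam) • Sc ((B.pComp A) x - μ • (x : H)))
        = (μ - lam) • EqS.symm (Sc ((B.pComp A) x - μ • (x : H))) from map_smul _ _ _]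
    rw [hW2, smul_smul, inv_mul_cancel₀ hml, one_smul]
    exact hS.2 x

end Main
/-- for normal `A`, `B` with `σ(AB) ≠ ℂ` and `σ(BA) ≠ ℂ`, one has
`σ(AB) = σ(BA)`. -/
theorem statement_6 {H : Type*} [NormedAddCommGroup H] [InnerProductSpace ℂ H] [CompleteSpace H]
    (A B : H →ₗ.[ℂ] H)
    (hdA : Dense (A.domain : Set H)) (hdB : Dense (B.domain : Set H))
    (hnA : A.IsNormal) (hnB : B.IsNormal)
    (hsAB : (A.pComp B).pSpectrum ≠ Set.univ) (hsBA : (B.pComp A).pSpectrum ≠ Set.univ) :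
    (A.pComp B).pSpectrum = (B.pComp A).pSpectrum := by
  have main : ∀ (A' B' : H →ₗ.[ℂ] H), Dense (A'.domain : Set H) →
      A'.IsNormal → B'.IsNormal →
      (B'.pComp A').pSpectrum ≠ Set.univ →
      ∀ lam : ℂ, lam ∉ (A'.pComp B').pSpectrum → lam ∉ (B'.pComp A').pSpectrum := by
    intro A' B' hdA' hnA' hnB' hsBA' lam hlamAB
    have h1 : ((A'.pComp B').subConst lam).IsBddInvertible := not_not.mp hlamAB
    obtain ⟨R, hR⟩ := (isBddInvertible_subConst_iff _ _).mp h1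
    obtain ⟨μ0, hμ0⟩ := (Set.ne_univ_iff_exists_notMem _).mp hsBA'
    have h2 : ((B'.pComp A').subConst μ0).IsBddInvertible := not_not.mp hμ0
    obtain ⟨S, hS⟩ := (isBddInvertible_subConst_iff _ _).mp h2
    have hinv : ∃ N, BddInvData (B'.pComp A') lam N := by
      by_cases hl0 : lam = 0
      · subst hl0
        exact key_zero A' B' hdA' hnA'.1 hnB'.1 hnA'.2.2 R hR S μ0 hS
      · exact key_nonzero A' B' hdA' hnA'.1 hnB'.1 lam μ0 hl0 R hR S hS
    intro hmem
    exact hmem ((isBddInvertible_subConst_iff _ _).mpr hinv)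
  apply Set.eq_of_subset_of_subset
  · intro lam hl
    by_contra hnot
    exact (main B A hdB hnB hnA hsAB lam hnot) hl
  · intro lam hl
    by_contra hnot
    exact (main A B hdA hnA hnB hsBA lam hnot) hl
end

section
/- Let T be an unbounded quasinormal operator such that Tⁿ is normal for some n ≥ 2. Then T is normal. -/
open LinearPMap

set_option linter.unusedSectionVars false

noncomputable section AuxLemmas

section NormedAux

variable {H : Type*} [NormedAddCommGroup H] [NormedSpace ℂ H]

theorem LinearPMap.mem_pComp_domain {g f : H →ₗ.[ℂ] H} {x : H} :
    x ∈ (g.pComp f).domain ↔ ∃ hx : x ∈ f.domain, f ⟨x, hx⟩ ∈ g.domain := by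
  constructor
  · intro hx
    obtain ⟨y, hy, rfl⟩ := Submodule.mem_map.mp hx
    exact ⟨y.2, by simpa using hy⟩
  · rintro ⟨hx, hfx⟩
    exact Submodule.mem_map.mpr ⟨⟨x, hx⟩, hfx, rfl⟩

theorem LinearPMap.pComp_apply_s12 {g f : H →ₗ.[ℂ] H} (x : (g.pComp f).domain)
    (h1 : (x : H) ∈ f.domain) (h2 : f ⟨x, h1⟩ ∈ g.domain) :
    (g.pComp f) x = g ⟨f ⟨x, h1⟩, h2⟩ := by
  obtain ⟨x, hx⟩ := x
  have key : ((Submodule.equivMapOfInjective f.domain.subtype (Submodule.injective_subtype _)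
      (g.domain.comap f.toFun)).symm) ⟨x, hx⟩
      = ⟨⟨x, h1⟩, h2⟩ := by
    rw [LinearEquiv.symm_apply_eq]
    rfl
  show (g.toFun ∘ₗ _ ∘ₗ _) _ = _
  simp only [LinearMap.comp_apply, LinearEquiv.coe_toLinearMap, LinearMap.restrict_apply]
  exact congrArg g.toFun (Subtype.ext (congrArg f.toFun (congrArg Subtype.val key)))

theorem LinearPMap.eq_apply {f g : H →ₗ.[ℂ] H} (h : f = g) {x : H} (hx : x ∈ f.domain)
    (hx' : x ∈ g.domain) : f ⟨x, hx⟩ = g ⟨x, hx'⟩ := by subst h; rfl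

theorem LinearPMap.apply_eq_zero_of_val_eq_zero (f : H →ₗ.[ℂ] H) {x : H} (hx : x ∈ f.domain)
    (h0 : x = 0) : f ⟨x, hx⟩ = 0 := by
  have : (⟨x, hx⟩ : f.domain) = 0 := Subtype.ext h0
  rw [this, map_zero]

end NormedAux

section HilbertAux

variable {H : Type*} [NormedAddCommGroup H] [InnerProductSpace ℂ H] [CompleteSpace H]

local notation "⟪" x ", " y "⟫" => @inner ℂ _ _ x y

/-- For a normal operator, the kernel of the adjoint is contained in the kernel. -/
theorem LinearPMap.IsNormal.ker_adjoint_le {N : H →ₗ.[ℂ] H} (hN : N.IsNormal) {x : H}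
    (hx : x ∈ N.adjoint.domain) (h0 : N.adjoint ⟨x, hx⟩ = 0) :
    ∃ hx' : x ∈ N.domain, N ⟨x, hx'⟩ = 0 := by
  have hdense := hN.2.1
  have hadj : N.adjoint ⟨x, hx⟩ ∈ N.domain := by rw [h0]; exact Submodule.zero_mem _
  have hmem : x ∈ (N.pComp N.adjoint).domain := mem_pComp_domain.mpr ⟨hx, hadj⟩
  have hmem' : x ∈ (N.adjoint.pComp N).domain := by rw [hN.2.2]; exact hmem
  obtain ⟨hx1, hx2⟩ := mem_pComp_domain.mp hmem'
  refine ⟨hx1, ?_⟩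
  have hval : N.adjoint ⟨N ⟨x, hx1⟩, hx2⟩ = 0 := by
    have e1 : (N.adjoint.pComp N) ⟨x, hmem'⟩ = N.adjoint ⟨N ⟨x, hx1⟩, hx2⟩ :=
      pComp_apply_s12 _ hx1 hx2
    have e2 : (N.pComp N.adjoint) ⟨x, hmem⟩ = N ⟨N.adjoint ⟨x, hx⟩, hadj⟩ :=
      pComp_apply_s12 _ hx hadj
    have e3 : N ⟨N.adjoint ⟨x, hx⟩, hadj⟩ = 0 := N.apply_eq_zero_of_val_eq_zero hadj h0
    rw [← e1, LinearPMap.eq_apply hN.2.2 hmem' hmem, e2, e3]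
  have hfa := (LinearPMap.adjoint_isFormalAdjoint hdense) ⟨N ⟨x, hx1⟩, hx2⟩ ⟨x, hx1⟩
  rw [hval] at hfa
  simp only [inner_zero_left] at hfa
  exact inner_self_eq_zero.mp hfa.symm

/-- For a quasinormal operator, `ker T² ⊆ ker T`. -/
theorem LinearPMap.IsQuasinormal.ker_sq {T : H →ₗ.[ℂ] H} (hT : T.IsQuasinormal) {x : H}
    (h1 : x ∈ T.domain) (h2 : T ⟨x, h1⟩ ∈ T.domain)
    (h0 : T ⟨T ⟨x, h1⟩, h2⟩ = 0) : T ⟨x, h1⟩ = 0 := by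
  have hdense := hT.2.1
  have hsq : x ∈ (T.pComp T).domain := mem_pComp_domain.mpr ⟨h1, h2⟩
  have hsqval : (T.pComp T) ⟨x, hsq⟩ = 0 := (pComp_apply_s12 _ h1 h2).trans h0
  have hsqmem : (T.pComp T) ⟨x, hsq⟩ ∈ T.adjoint.domain := by
    rw [hsqval]; exact Submodule.zero_mem _
  have hmem : x ∈ (T.adjoint.pComp (T.pComp T)).domain :=
    mem_pComp_domain.mpr ⟨hsq, hsqmem⟩
  have hmem' : x ∈ (T.pComp (T.adjoint.pComp T)).domain := by rw [hT.2.2]; exact hmem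
  obtain ⟨ha, hb⟩ := mem_pComp_domain.mp hmem'
  obtain ⟨ha1, ha2⟩ := mem_pComp_domain.mp ha
  have e2 : (T.adjoint.pComp T) ⟨x, ha⟩ = T.adjoint ⟨T ⟨x, ha1⟩, ha2⟩ :=
    pComp_apply_s12 _ ha1 ha2
  have hb2 : T.adjoint ⟨T ⟨x, ha1⟩, ha2⟩ ∈ T.domain := e2 ▸ hb
  -- the value `T (T† T x)` is zero
  have hTu : T ⟨T.adjoint ⟨T ⟨x, ha1⟩, ha2⟩, hb2⟩ = 0 := by
    have e1 : (T.pComp (T.adjoint.pComp T)) ⟨x, hmem'⟩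
        = T ⟨(T.adjoint.pComp T) ⟨x, ha⟩, hb⟩ := pComp_apply_s12 _ ha hb
    have e3 : (T.adjoint.pComp (T.pComp T)) ⟨x, hmem⟩
        = T.adjoint ⟨(T.pComp T) ⟨x, hsq⟩, hsqmem⟩ := pComp_apply_s12 _ hsq hsqmem
    have e4 : T.adjoint ⟨(T.pComp T) ⟨x, hsq⟩, hsqmem⟩ = 0 :=
      T.adjoint.apply_eq_zero_of_val_eq_zero hsqmem hsqval
    have e5 : T ⟨(T.adjoint.pComp T) ⟨x, ha⟩, hb⟩ = 0 := by
      rw [← e1, LinearPMap.eq_apply hT.2.2 hmem' hmem, e3, e4]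
    rw [← e5]
    exact congrArg T.toFun (Subtype.ext e2.symm)
  -- hence `u := T† T x` is zero
  have hu0 : T.adjoint ⟨T ⟨x, ha1⟩, ha2⟩ = 0 := by
    have hfa := (LinearPMap.adjoint_isFormalAdjoint hdense) ⟨T ⟨x, ha1⟩, ha2⟩
      ⟨T.adjoint ⟨T ⟨x, ha1⟩, ha2⟩, hb2⟩
    rw [hTu] at hfa
    simp only [inner_zero_right] at hfa
    exact inner_self_eq_zero.mp hfa
  -- hence `T x = 0`
  have hfa := (LinearPMap.adjoint_isFormalAdjoint hdense) ⟨T ⟨x, ha1⟩, ha2⟩ ⟨x, ha1⟩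
  rw [hu0] at hfa
  simp only [inner_zero_left] at hfa
  have : T ⟨x, ha1⟩ = 0 := inner_self_eq_zero.mp hfa.symm
  exact (congrArg T.toFun (Subtype.ext (rfl : x = x))).trans this

/-- For a quasinormal operator, `ker Tⁿ ⊆ ker T`. -/
theorem LinearPMap.IsQuasinormal.ker_pPow {T : H →ₗ.[ℂ] H} (hT : T.IsQuasinormal) :
    ∀ (n : ℕ) (x : H) (hx : x ∈ (T.pPow (n + 1)).domain),
      (T.pPow (n + 1)) ⟨x, hx⟩ = 0 → ∃ h1 : x ∈ T.domain, T ⟨x, h1⟩ = 0 := by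
  intro n
  induction n with
  | zero =>
    intro x hx h0
    obtain ⟨hx0, hmem⟩ := mem_pComp_domain.mp hx
    have hid : (T.pPow 0) ⟨x, hx0⟩ = x := by
      simp [LinearPMap.pPow, LinearMap.toPMap_apply]
    have h1 : x ∈ T.domain := hid ▸ hmem
    refine ⟨h1, ?_⟩
    have e1 : (T.pPow 1) ⟨x, hx⟩ = T ⟨(T.pPow 0) ⟨x, hx0⟩, hmem⟩ := pComp_apply_s12 _ hx0 hmem
    rw [e1] at h0
    rw [← h0]
    exact congrArg T.toFun (Subtype.ext hid.symm)
  | succ n ih =>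
    intro x hx h0
    obtain ⟨hd, hy⟩ := mem_pComp_domain.mp hx
    have hyval : T ⟨(T.pPow (n + 1)) ⟨x, hd⟩, hy⟩ = 0 := by
      rw [← h0]; exact (pComp_apply_s12 (g := T) (f := T.pPow (n + 1)) ⟨x, hx⟩ hd hy).symm
    obtain ⟨hd', hz⟩ := mem_pComp_domain.mp hd
    have ez : (T.pPow (n + 1)) ⟨x, hd⟩ = T ⟨(T.pPow n) ⟨x, hd'⟩, hz⟩ := pComp_apply_s12 _ hd' hz
    have hy2 : T ⟨(T.pPow n) ⟨x, hd'⟩, hz⟩ ∈ T.domain := ez ▸ hy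
    have h02 : T ⟨T ⟨(T.pPow n) ⟨x, hd'⟩, hz⟩, hy2⟩ = 0 := by
      rw [← hyval]
      exact congrArg T.toFun (Subtype.ext ez.symm)
    have hTz : T ⟨(T.pPow n) ⟨x, hd'⟩, hz⟩ = 0 := hT.ker_sq hz hy2 h02
    refine ih x hd ?_
    rw [ez, hTz]

/-- `ker T* ⊆ ker (Tⁿ)*`. -/
theorem LinearPMap.ker_adjoint_le_ker_pPow_adjoint {T : H →ₗ.[ℂ] H}
    (hd : Dense (T.domain : Set H)) (m : ℕ)
    (hdm : Dense ((T.pPow (m + 1)).domain : Set H)) {x : H}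
    (hx : x ∈ T.adjoint.domain) (h0 : T.adjoint ⟨x, hx⟩ = 0) :
    ∃ h : x ∈ (T.pPow (m + 1)).adjoint.domain, (T.pPow (m + 1)).adjoint ⟨x, h⟩ = 0 := by
  have key : ∀ y : (T.pPow (m + 1)).domain, ⟪(0 : H), (y : H)⟫ = ⟪x, (T.pPow (m + 1)) y⟫ := by
    intro y
    obtain ⟨y, hy⟩ := y
    obtain ⟨hy1, hy2⟩ := mem_pComp_domain.mp hy
    have e1 : (T.pPow (m + 1)) ⟨y, hy⟩ = T ⟨(T.pPow m) ⟨y, hy1⟩, hy2⟩ := pComp_apply_s12 _ hy1 hy2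
    rw [e1]
    have hfa := (LinearPMap.adjoint_isFormalAdjoint hd) ⟨x, hx⟩ ⟨(T.pPow m) ⟨y, hy1⟩, hy2⟩
    rw [h0] at hfa
    simp only [inner_zero_left] at hfa ⊢
    exact hfa
  have hmem : x ∈ (T.pPow (m + 1)).adjoint.domain :=
    LinearPMap.mem_adjoint_domain_of_exists _ ⟨0, key⟩
  exact ⟨hmem, LinearPMap.adjoint_apply_eq hdm ⟨x, hmem⟩ key⟩


/-- Core graph-decomposition lemma (von Neumann). -/

theorem vonNeumann_core (T : H →ₗ.[ℂ] H) (hc : T.IsClosed) (hd : Dense (T.domain : Set H))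
    (v₁ v₂ : H) :
    ∃ (x : H) (hx : x ∈ T.domain) (z₁ : H) (hz₁ : z₁ ∈ T.adjoint.domain),
      v₁ = -(T ⟨x, hx⟩) + z₁ ∧ v₂ = x + T.adjoint ⟨z₁, hz₁⟩ := by
  classical
  set P := WithLp 2 (H × H) with hP
  let φ : T.domain →ₗ[ℂ] P :=
    ((WithLp.linearEquiv 2 ℂ (H × H)).symm.toLinearMap) ∘ₗ
      (LinearMap.prod (-T.toFun) T.domain.subtype)
  let JG : Submodule ℂ P := LinearMap.range φ
  have hφ : ∀ d : T.domain, ((φ d).fst = -(T d) ∧ (φ d).snd = (d : H)) := by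
    intro d
    constructor <;> rfl
  -- JG is closed
  have hΦcont : Continuous (fun p : P => ((p.snd, -p.fst) : H × H)) := by
    have h1 : Continuous (fun p : P => p.fst) :=
      (continuous_fst.comp (WithLp.prodContinuousLinearEquiv 2 ℂ H H).continuous)
    have h2 : Continuous (fun p : P => p.snd) :=
      (continuous_snd.comp (WithLp.prodContinuousLinearEquiv 2 ℂ H H).continuous)
    exact h2.prodMk h1.neg
  have hJGset : (JG : Set P) = (fun p : P => ((p.snd, -p.fst) : H × H)) ⁻¹' (T.graph : Set (H × H)) := by
    ext p
    simp only [SetLike.mem_coe, Set.mem_preimage]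
    constructor
    · rintro ⟨d, rfl⟩
      rw [LinearPMap.mem_graph_iff]
      exact ⟨d, by rw [(hφ d).2], by rw [(hφ d).1, neg_neg]⟩
    · intro hp
      rw [LinearPMap.mem_graph_iff] at hp
      obtain ⟨d, hd1, hd2⟩ := hp
      refine ⟨d, ?_⟩
      have hd2' : (T d : H) = -p.fst := hd2
      have hd1' : (d : H) = p.snd := hd1
      have h1 : (φ d).fst = p.fst := by rw [(hφ d).1, hd2', neg_neg]
      have h2 : (φ d).snd = p.snd := by rw [(hφ d).2, hd1']
      exact WithLp.ofLp_injective 2 (Prod.ext h1 h2)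
  have hJGclosed : IsClosed (JG : Set P) := by
    rw [hJGset]; exact hc.preimage hΦcont
  haveI : CompleteSpace JG := hJGclosed.completeSpace_coe
  -- decompose v
  set v : P := (WithLp.equiv 2 (H × H)).symm (v₁, v₂) with hv
  obtain ⟨u, hu, z, hz, hsum⟩ := JG.exists_add_mem_mem_orthogonal v
  obtain ⟨d, rfl⟩ := hu
  -- z is in the graph of the adjoint
  have horth : ∀ e : T.domain, ⟪z.snd, (e : H)⟫ = ⟪z.fst, T e⟫ := by
    intro e
    have := (Submodule.mem_orthogonal JG z).mp hz (φ e) ⟨e, rfl⟩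
    rw [WithLp.prod_inner_apply] at this
    change ⟪(φ e).fst, z.fst⟫ + ⟪(φ e).snd, z.snd⟫ = 0 at this
    rw [(hφ e).1, (hφ e).2, inner_neg_left] at this
    have h2 : ⟪T e, z.fst⟫ = ⟪(e : H), z.snd⟫ := by linear_combination -this
    calc ⟪z.snd, (e : H)⟫ = starRingEnd ℂ ⟪(e : H), z.snd⟫ := (inner_conj_symm _ _).symm
    _ = starRingEnd ℂ ⟪T e, z.fst⟫ := by rw [h2]
    _ = ⟪z.fst, T e⟫ := inner_conj_symm _ _
  have hz₁ : z.fst ∈ T.adjoint.domain :=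
    LinearPMap.mem_adjoint_domain_of_exists _ ⟨z.snd, horth⟩
  have hz₂ : T.adjoint ⟨z.fst, hz₁⟩ = z.snd :=
    LinearPMap.adjoint_apply_eq hd _ horth
  refine ⟨(d : H), d.2, z.fst, hz₁, ?_, ?_⟩
  · exact congrArg WithLp.fst hsum
  · rw [hz₂]
    exact congrArg WithLp.snd hsum


/-- `x` solves `(I + T*T) x = h`. -/

def SolA (T : H →ₗ.[ℂ] H) (h x : H) : Prop :=
  ∃ (hx : x ∈ T.domain) (hTx : T ⟨x, hx⟩ ∈ T.adjoint.domain),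
    x + T.adjoint ⟨T ⟨x, hx⟩, hTx⟩ = h

/-- `y` solves `(I + TT*) y = h`. -/
def SolB (T : H →ₗ.[ℂ] H) (h y : H) : Prop :=
  ∃ (hy : y ∈ T.adjoint.domain) (hTy : T.adjoint ⟨y, hy⟩ ∈ T.domain),
    y + T ⟨T.adjoint ⟨y, hy⟩, hTy⟩ = h

theorem solA_surj {T : H →ₗ.[ℂ] H} (hc : T.IsClosed) (hd : Dense (T.domain : Set H)) (h : H) :
    ∃ x, SolA T h x := by
  obtain ⟨x, hx, z₁, hz₁, e1, e2⟩ := vonNeumann_core T hc hd 0 h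
  have hzeq : z₁ = T ⟨x, hx⟩ := by
    have := e1.symm
    rw [neg_add_eq_zero] at this
    exact this.symm
  have hTx : T ⟨x, hx⟩ ∈ T.adjoint.domain := hzeq ▸ hz₁
  refine ⟨x, hx, hTx, ?_⟩
  rw [e2]
  congr 1
  exact congrArg T.adjoint.toFun (Subtype.ext hzeq.symm)

theorem solB_surj {T : H →ₗ.[ℂ] H} (hc : T.IsClosed) (hd : Dense (T.domain : Set H)) (h : H) :
    ∃ y, SolB T h y := by
  obtain ⟨x, hx, z₁, hz₁, e1, e2⟩ := vonNeumann_core T hc hd h 0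
  have hxeq : x = -T.adjoint ⟨z₁, hz₁⟩ := by
    have := e2.symm
    rw [add_eq_zero_iff_eq_neg] at this
    exact this
  have hTy : T.adjoint ⟨z₁, hz₁⟩ ∈ T.domain := by
    have : -x ∈ T.domain := Submodule.neg_mem _ hx
    rwa [hxeq, neg_neg] at this
  refine ⟨z₁, hz₁, hTy, ?_⟩
  have hTval : T ⟨T.adjoint ⟨z₁, hz₁⟩, hTy⟩ = -(T ⟨x, hx⟩) := by
    have hval : T.adjoint ⟨z₁, hz₁⟩ = -x := by rw [hxeq, neg_neg]
    have h1 : (⟨T.adjoint ⟨z₁, hz₁⟩, hTy⟩ : T.domain) = -⟨x, hx⟩ := Subtype.ext hval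
    rw [h1, LinearPMap.map_neg]
  rw [hTval, e1]
  abel

theorem solA_sub {T : H →ₗ.[ℂ] H} {h h' x x' : H} (hs : SolA T h x) (hs' : SolA T h' x') :
    SolA T (h - h') (x - x') := by
  obtain ⟨hx, hTx, heq⟩ := hs
  obtain ⟨hx', hTx', heq'⟩ := hs'
  have hm : x - x' ∈ T.domain := Submodule.sub_mem _ hx hx'
  have hsub : (⟨x - x', hm⟩ : T.domain) = ⟨x, hx⟩ - ⟨x', hx'⟩ := Subtype.ext rfl
  have hTval : T ⟨x - x', hm⟩ = T ⟨x, hx⟩ - T ⟨x', hx'⟩ := by rw [hsub, LinearPMap.map_sub]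
  have hTm : T ⟨x - x', hm⟩ ∈ T.adjoint.domain := by
    rw [hTval]; exact Submodule.sub_mem _ hTx hTx'
  refine ⟨hm, hTm, ?_⟩
  have hsub2 : (⟨T ⟨x - x', hm⟩, hTm⟩ : T.adjoint.domain)
      = ⟨T ⟨x, hx⟩, hTx⟩ - ⟨T ⟨x', hx'⟩, hTx'⟩ := Subtype.ext hTval
  rw [hsub2, LinearPMap.map_sub]
  rw [← heq, ← heq']
  abel

theorem solA_norm_le {T : H →ₗ.[ℂ] H} (hd : Dense (T.domain : Set H)) {h x : H}
    (hs : SolA T h x) : ‖x‖ ≤ ‖h‖ := by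
  obtain ⟨hx, hTx, heq⟩ := hs
  have hfa := (LinearPMap.adjoint_isFormalAdjoint hd) ⟨T ⟨x, hx⟩, hTx⟩ ⟨x, hx⟩
  have hinner : ⟪h, x⟫ = ((‖x‖ : ℂ)) ^ 2 + ((‖T ⟨x, hx⟩‖ : ℂ)) ^ 2 := by
    rw [← heq, inner_add_left, hfa, inner_self_eq_norm_sq_to_K, inner_self_eq_norm_sq_to_K]; rfl
  have hre : Complex.re ⟪h, x⟫ = ‖x‖ ^ 2 + ‖T ⟨x, hx⟩‖ ^ 2 := by
    have hc : ((‖x‖ : ℂ)) ^ 2 + ((‖T ⟨x, hx⟩‖ : ℂ)) ^ 2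
        = ((‖x‖ ^ 2 + ‖T ⟨x, hx⟩‖ ^ 2 : ℝ) : ℂ) := by push_cast; ring
    rw [hinner, hc, Complex.ofReal_re]
  have h1 : ‖x‖ ^ 2 ≤ Complex.re ⟪h, x⟫ := by
    rw [hre]; nlinarith [sq_nonneg ‖T ⟨x, hx⟩‖]
  have h2 : Complex.re ⟪h, x⟫ ≤ ‖h‖ * ‖x‖ := by
    calc Complex.re ⟪h, x⟫ ≤ ‖⟪h, x⟫‖ := Complex.re_le_norm _
    _ ≤ ‖h‖ * ‖x‖ := norm_inner_le_norm _ _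
  nlinarith [norm_nonneg x, norm_nonneg h]

theorem solA_uniq {T : H →ₗ.[ℂ] H} (hd : Dense (T.domain : Set H)) {h x x' : H}
    (hs : SolA T h x) (hs' : SolA T h x') : x = x' := by
  have := solA_norm_le hd (solA_sub hs hs')
  simp only [sub_self, norm_zero] at this
  have : ‖x - x'‖ = 0 := le_antisymm this (norm_nonneg _)
  rwa [norm_sub_eq_zero_iff] at this

theorem solB_sub {T : H →ₗ.[ℂ] H} {h h' y y' : H} (hs : SolB T h y) (hs' : SolB T h' y') :
    SolB T (h - h') (y - y') := by
  obtain ⟨hy, hTy, heq⟩ := hs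
  obtain ⟨hy', hTy', heq'⟩ := hs'
  have hm : y - y' ∈ T.adjoint.domain := Submodule.sub_mem _ hy hy'
  have hsub : (⟨y - y', hm⟩ : T.adjoint.domain) = ⟨y, hy⟩ - ⟨y', hy'⟩ := Subtype.ext rfl
  have hTval : T.adjoint ⟨y - y', hm⟩ = T.adjoint ⟨y, hy⟩ - T.adjoint ⟨y', hy'⟩ := by
    rw [hsub, LinearPMap.map_sub]
  have hTm : T.adjoint ⟨y - y', hm⟩ ∈ T.domain := by
    rw [hTval]; exact Submodule.sub_mem _ hTy hTy'
  refine ⟨hm, hTm, ?_⟩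
  have hsub2 : (⟨T.adjoint ⟨y - y', hm⟩, hTm⟩ : T.domain)
      = ⟨T.adjoint ⟨y, hy⟩, hTy⟩ - ⟨T.adjoint ⟨y', hy'⟩, hTy'⟩ := Subtype.ext hTval
  rw [hsub2, LinearPMap.map_sub]
  rw [← heq, ← heq']
  abel

theorem solB_norm_le {T : H →ₗ.[ℂ] H} (hd : Dense (T.domain : Set H)) {h y : H}
    (hs : SolB T h y) : ‖y‖ ≤ ‖h‖ := by
  obtain ⟨hy, hTy, heq⟩ := hs
  have hfa := ((LinearPMap.adjoint_isFormalAdjoint hd).symm) ⟨T.adjoint ⟨y, hy⟩, hTy⟩ ⟨y, hy⟩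
  have hinner : ⟪h, y⟫ = ((‖y‖ : ℂ)) ^ 2 + ((‖T.adjoint ⟨y, hy⟩‖ : ℂ)) ^ 2 := by
    rw [← heq, inner_add_left, hfa, inner_self_eq_norm_sq_to_K, inner_self_eq_norm_sq_to_K]; rfl
  have hre : Complex.re ⟪h, y⟫ = ‖y‖ ^ 2 + ‖T.adjoint ⟨y, hy⟩‖ ^ 2 := by
    have hc : ((‖y‖ : ℂ)) ^ 2 + ((‖T.adjoint ⟨y, hy⟩‖ : ℂ)) ^ 2
        = ((‖y‖ ^ 2 + ‖T.adjoint ⟨y, hy⟩‖ ^ 2 : ℝ) : ℂ) := by push_cast; ring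
    rw [hinner, hc, Complex.ofReal_re]
  have h1 : ‖y‖ ^ 2 ≤ Complex.re ⟪h, y⟫ := by
    rw [hre]; nlinarith [sq_nonneg ‖T.adjoint ⟨y, hy⟩‖]
  have h2 : Complex.re ⟪h, y⟫ ≤ ‖h‖ * ‖y‖ := by
    calc Complex.re ⟪h, y⟫ ≤ ‖⟪h, y⟫‖ := Complex.re_le_norm _
    _ ≤ ‖h‖ * ‖y‖ := norm_inner_le_norm _ _
  nlinarith [norm_nonneg y, norm_nonneg h]

theorem solB_uniq {T : H →ₗ.[ℂ] H} (hd : Dense (T.domain : Set H)) {h y y' : H}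
    (hs : SolB T h y) (hs' : SolB T h y') : y = y' := by
  have := solB_norm_le hd (solB_sub hs hs')
  simp only [sub_self, norm_zero] at this
  have : ‖y - y'‖ = 0 := le_antisymm this (norm_nonneg _)
  rwa [norm_sub_eq_zero_iff] at this


theorem solA_map_T {T : H →ₗ.[ℂ] H} (hq : T.IsQuasinormal) {h y : H} (hh : h ∈ T.domain)
    (hs : SolA T h y) : ∃ hy : y ∈ T.domain, SolA T (T ⟨h, hh⟩) (T ⟨y, hy⟩) := by
  obtain ⟨hy, hTy, heq⟩ := hs
  have hAy : T.adjoint ⟨T ⟨y, hy⟩, hTy⟩ = h - y := eq_sub_of_add_eq' heq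
  have hAyd : T.adjoint ⟨T ⟨y, hy⟩, hTy⟩ ∈ T.domain := by
    rw [hAy]; exact Submodule.sub_mem _ hh hy
  have hm1 : y ∈ (T.adjoint.pComp T).domain := mem_pComp_domain.mpr ⟨hy, hTy⟩
  have hm1val : (T.adjoint.pComp T) ⟨y, hm1⟩ = T.adjoint ⟨T ⟨y, hy⟩, hTy⟩ :=
    pComp_apply_s12 _ hy hTy
  have hAB : (T.adjoint.pComp T) ⟨y, hm1⟩ ∈ T.domain := by rw [hm1val]; exact hAyd
  have hmL : y ∈ (T.pComp (T.adjoint.pComp T)).domain := mem_pComp_domain.mpr ⟨hm1, hAB⟩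
  have hmR : y ∈ (T.adjoint.pComp (T.pComp T)).domain := by rw [← hq.2.2]; exact hmL
  obtain ⟨hsq, hT2⟩ := mem_pComp_domain.mp hmR
  obtain ⟨hy', hTy'⟩ := mem_pComp_domain.mp hsq
  have hsqval : (T.pComp T) ⟨y, hsq⟩ = T ⟨T ⟨y, hy'⟩, hTy'⟩ := pComp_apply_s12 _ hy' hTy'
  have eL : (T.pComp (T.adjoint.pComp T)) ⟨y, hmL⟩
      = T ⟨T.adjoint ⟨T ⟨y, hy⟩, hTy⟩, hAyd⟩ := by
    have e0 : (T.pComp (T.adjoint.pComp T)) ⟨y, hmL⟩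
        = T ⟨(T.adjoint.pComp T) ⟨y, hm1⟩, hAB⟩ := pComp_apply_s12 _ hm1 hAB
    rw [e0]
    exact congrArg T.toFun (Subtype.ext hm1val)
  have eR : (T.adjoint.pComp (T.pComp T)) ⟨y, hmR⟩
      = T.adjoint ⟨(T.pComp T) ⟨y, hsq⟩, hT2⟩ := pComp_apply_s12 _ hsq hT2
  have hT2' : T ⟨T ⟨y, hy'⟩, hTy'⟩ ∈ T.adjoint.domain := by rw [← hsqval]; exact hT2
  refine ⟨hy', hTy', hT2', ?_⟩
  have key : T.adjoint ⟨T ⟨T ⟨y, hy'⟩, hTy'⟩, hT2'⟩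
      = T ⟨T.adjoint ⟨T ⟨y, hy⟩, hTy⟩, hAyd⟩ := by
    have hQval := LinearPMap.eq_apply hq.2.2 hmL hmR
    rw [eL, eR] at hQval
    rw [hQval]
    exact congrArg T.adjoint.toFun (Subtype.ext hsqval.symm)
  have hsubm : h - y ∈ T.domain := Submodule.sub_mem _ hh hy
  have hsplit : T ⟨T.adjoint ⟨T ⟨y, hy⟩, hTy⟩, hAyd⟩ = T ⟨h, hh⟩ - T ⟨y, hy⟩ := by
    have e : (⟨T.adjoint ⟨T ⟨y, hy⟩, hTy⟩, hAyd⟩ : T.domain) = ⟨h, hh⟩ - ⟨y, hy⟩ :=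
      Subtype.ext hAy
    rw [e, LinearPMap.map_sub]
  rw [key, hsplit]
  have hyy : T ⟨y, hy'⟩ = T ⟨y, hy⟩ := rfl
  rw [hyy]
  abel

theorem solB_of_solA {T : H →ₗ.[ℂ] H} {h u : H} (hh : h ∈ T.domain)
    (hs : SolA T h u) : ∃ hu : u ∈ T.domain, SolB T (T ⟨h, hh⟩) (T ⟨u, hu⟩) := by
  obtain ⟨hu, hTu, heq⟩ := hs
  have hAu : T.adjoint ⟨T ⟨u, hu⟩, hTu⟩ = h - u := eq_sub_of_add_eq' heq
  have hsubm : h - u ∈ T.domain := Submodule.sub_mem _ hh hu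
  have hAud : T.adjoint ⟨T ⟨u, hu⟩, hTu⟩ ∈ T.domain := by rw [hAu]; exact hsubm
  refine ⟨hu, hTu, hAud, ?_⟩
  have e : (⟨T.adjoint ⟨T ⟨u, hu⟩, hTu⟩, hAud⟩ : T.domain) = ⟨h, hh⟩ - ⟨u, hu⟩ :=
    Subtype.ext hAu
  rw [e, LinearPMap.map_sub]
  abel

theorem sol_of_orthogonal {T : H →ₗ.[ℂ] H} (hd : Dense (T.domain : Set H))
    (hker : ∀ (x : H) (hx : x ∈ T.adjoint.domain), T.adjoint ⟨x, hx⟩ = 0 →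
      ∃ h : x ∈ T.domain, T ⟨x, h⟩ = 0)
    {w : H} (hw : w ∈ (LinearMap.range T.toFun : Submodule ℂ H)ᗮ) :
    SolA T w w ∧ SolB T w w := by
  have horth : ∀ e : T.domain, ⟪(0 : H), (e : H)⟫ = ⟪w, T e⟫ := by
    intro e
    have h1 : ⟪T e, w⟫ = 0 :=
      (Submodule.mem_orthogonal _ w).mp hw (T e) ⟨e, rfl⟩
    have h2 : ⟪w, T e⟫ = 0 := by rw [← inner_conj_symm, h1]; simp
    rw [h2, inner_zero_left]
  have hwadj : w ∈ T.adjoint.domain := LinearPMap.mem_adjoint_domain_of_exists _ ⟨0, horth⟩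
  have hw0 : T.adjoint ⟨w, hwadj⟩ = 0 := LinearPMap.adjoint_apply_eq hd _ horth
  obtain ⟨hwT, hwT0⟩ := hker w hwadj hw0
  constructor
  · have hTm : T ⟨w, hwT⟩ ∈ T.adjoint.domain := by rw [hwT0]; exact Submodule.zero_mem _
    refine ⟨hwT, hTm, ?_⟩
    rw [T.adjoint.apply_eq_zero_of_val_eq_zero hTm hwT0, add_zero]
  · have hTm : T.adjoint ⟨w, hwadj⟩ ∈ T.domain := by rw [hw0]; exact Submodule.zero_mem _
    refine ⟨hwadj, hTm, ?_⟩
    rw [T.apply_eq_zero_of_val_eq_zero hTm hw0, add_zero]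

/-- Uchiyama's theorem: a quasinormal operator whose adjoint kernel is contained in its kernel
is normal. -/
theorem LinearPMap.IsQuasinormal.isNormal_of_ker {T : H →ₗ.[ℂ] H} (hT : T.IsQuasinormal)
    (hker : ∀ (x : H) (hx : x ∈ T.adjoint.domain), T.adjoint ⟨x, hx⟩ = 0 →
      ∃ h : x ∈ T.domain, T ⟨x, h⟩ = 0) : T.IsNormal := by
  obtain ⟨hc, hden, hQ⟩ := id hT
  refine ⟨hc, hden, ?_⟩
  choose cA scA using solA_surj hc hden
  choose cB scB using solB_surj hc hden
  -- `cA` and `cB` agree everywhere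
  have hAB : ∀ h, cA h = cB h := by
    have hlipA : LipschitzWith 1 cA := by
      refine LipschitzWith.of_dist_le_mul fun a b => ?_
      rw [dist_eq_norm, dist_eq_norm, NNReal.coe_one, one_mul]
      have h1 : cA a - cA b = cA (a - b) :=
        solA_uniq hden (solA_sub (scA a) (scA b)) (scA (a - b))
      rw [h1]; exact solA_norm_le hden (scA (a - b))
    have hlipB : LipschitzWith 1 cB := by
      refine LipschitzWith.of_dist_le_mul fun a b => ?_
      rw [dist_eq_norm, dist_eq_norm, NNReal.coe_one, one_mul]
      have h1 : cB a - cB b = cB (a - b) :=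
        solB_uniq hden (solB_sub (scB a) (scB b)) (scB (a - b))
      rw [h1]; exact solB_norm_le hden (scB (a - b))
    set R : Submodule ℂ H := LinearMap.range T.toFun with hR
    have hdenseS : Dense ((R ⊔ Rᗮ : Submodule ℂ H) : Set H) := by
      rw [Submodule.dense_iff_topologicalClosure_eq_top,
        Submodule.topologicalClosure_eq_top_iff]
      rw [eq_bot_iff]
      intro z hz
      have h1 : z ∈ Rᗮ := Submodule.orthogonal_le le_sup_left hz
      have h2 : z ∈ Rᗮᗮ := Submodule.orthogonal_le le_sup_right hz
      exact (Submodule.orthogonal_disjoint Rᗮ).le_bot (Submodule.mem_inf.mpr ⟨h1, h2⟩)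
    have heqOn : Set.EqOn cA cB ((R ⊔ Rᗮ : Submodule ℂ H) : Set H) := by
      intro h hmem
      obtain ⟨r, hr, w, hw, rfl⟩ := Submodule.mem_sup.mp hmem
      obtain ⟨d, rfl⟩ := hr
      -- on the range of T
      obtain ⟨hyd, hsolTA⟩ := solA_map_T hT d.2 (scA (d : H))
      have e1 : cA (T.toFun d) = T ⟨cA (d : H), hyd⟩ :=
        solA_uniq hden (scA (T.toFun d)) hsolTA
      obtain ⟨hud, hsolTB⟩ := solB_of_solA d.2 (scA (d : H))
      have e2 : cB (T.toFun d) = T ⟨cA (d : H), hud⟩ :=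
        solB_uniq hden (scB (T.toFun d)) hsolTB
      have er : cA (T.toFun d) = cB (T.toFun d) := by rw [e1, e2]
      -- on the orthogonal complement of the range
      obtain ⟨sA, sB⟩ := sol_of_orthogonal hden hker hw
      have ewA : cA w = w := solA_uniq hden (scA w) sA
      have ewB : cB w = w := solB_uniq hden (scB w) sB
      -- additivity
      have hcancel : T.toFun d + w - w = T.toFun d := add_sub_cancel_right _ _
      have haddA : cA (T.toFun d + w) = cA (T.toFun d) + cA w := by
        have h1 : cA (T.toFun d + w) - cA w = cA (T.toFun d) := by
          have hs := solA_sub (scA (T.toFun d + w)) (scA w)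
          rw [hcancel] at hs
          exact solA_uniq hden hs (scA _)
        rw [← h1]; abel
      have haddB : cB (T.toFun d + w) = cB (T.toFun d) + cB w := by
        have h1 : cB (T.toFun d + w) - cB w = cB (T.toFun d) := by
          have hs := solB_sub (scB (T.toFun d + w)) (scB w)
          rw [hcancel] at hs
          exact solB_uniq hden hs (scB _)
        rw [← h1]; abel
      show cA (T.toFun d + w) = cB (T.toFun d + w)
      rw [haddA, haddB, er, ewA, ewB]
    exact congrFun (Continuous.ext_on hdenseS hlipA.continuous hlipB.continuous heqOn)
  -- now conclude equality of the two unbounded operators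
  have dirAB : ∀ (x : H), x ∈ (T.adjoint.pComp T).domain → x ∈ (T.pComp T.adjoint).domain := by
    intro x hx
    obtain ⟨h1, h2⟩ := mem_pComp_domain.mp hx
    have hsol : SolA T (x + T.adjoint ⟨T ⟨x, h1⟩, h2⟩) x := ⟨h1, h2, rfl⟩
    have hx_cA : x = cA (x + T.adjoint ⟨T ⟨x, h1⟩, h2⟩) :=
      solA_uniq hden hsol (scA _)
    have hx_cB : x = cB (x + T.adjoint ⟨T ⟨x, h1⟩, h2⟩) := hx_cA.trans (hAB _)
    obtain ⟨m1, m2, meq⟩ := scB (x + T.adjoint ⟨T ⟨x, h1⟩, h2⟩)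
    have hxB : x ∈ T.adjoint.domain := by rw [hx_cB]; exact m1
    have hxB2 : T.adjoint ⟨x, hxB⟩ ∈ T.domain := by
      have e : T.adjoint ⟨x, hxB⟩ = T.adjoint ⟨cB (x + T.adjoint ⟨T ⟨x, h1⟩, h2⟩), m1⟩ :=
        congrArg T.adjoint.toFun (Subtype.ext hx_cB)
      rw [e]; exact m2
    exact mem_pComp_domain.mpr ⟨hxB, hxB2⟩
  have dirBA : ∀ (x : H), x ∈ (T.pComp T.adjoint).domain → x ∈ (T.adjoint.pComp T).domain := by
    intro x hx
    obtain ⟨h1, h2⟩ := mem_pComp_domain.mp hx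
    have hsol : SolB T (x + T ⟨T.adjoint ⟨x, h1⟩, h2⟩) x := ⟨h1, h2, rfl⟩
    have hx_cB : x = cB (x + T ⟨T.adjoint ⟨x, h1⟩, h2⟩) :=
      solB_uniq hden hsol (scB _)
    have hx_cA : x = cA (x + T ⟨T.adjoint ⟨x, h1⟩, h2⟩) := hx_cB.trans ((hAB _).symm)
    obtain ⟨m1, m2, meq⟩ := scA (x + T ⟨T.adjoint ⟨x, h1⟩, h2⟩)
    have hxA : x ∈ T.domain := by rw [hx_cA]; exact m1
    have hxA2 : T ⟨x, hxA⟩ ∈ T.adjoint.domain := by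
      have e : T ⟨x, hxA⟩ = T ⟨cA (x + T ⟨T.adjoint ⟨x, h1⟩, h2⟩), m1⟩ :=
        congrArg T.toFun (Subtype.ext hx_cA)
      rw [e]; exact m2
    exact mem_pComp_domain.mpr ⟨hxA, hxA2⟩
  have hdom : (T.adjoint.pComp T).domain = (T.pComp T.adjoint).domain := by
    ext x
    exact ⟨dirAB x, dirBA x⟩
  refine LinearPMap.ext hdom ?_
  intro a hx hy
  obtain ⟨h1, h2⟩ := mem_pComp_domain.mp hx
  have eLHS : (T.adjoint.pComp T) ⟨a, hx⟩ = T.adjoint ⟨T ⟨a, h1⟩, h2⟩ := pComp_apply_s12 _ h1 h2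
  -- now compute the RHS
  have hsol : SolA T (a + T.adjoint ⟨T ⟨a, h1⟩, h2⟩) a := ⟨h1, h2, rfl⟩
  have ha_cA : a = cA (a + T.adjoint ⟨T ⟨a, h1⟩, h2⟩) := solA_uniq hden hsol (scA _)
  have ha_cB : a = cB (a + T.adjoint ⟨T ⟨a, h1⟩, h2⟩) := ha_cA.trans (hAB _)
  obtain ⟨m1, m2, meq⟩ := scB (a + T.adjoint ⟨T ⟨a, h1⟩, h2⟩)
  obtain ⟨n1, n2⟩ := mem_pComp_domain.mp hy
  have eRHS : (T.pComp T.adjoint) ⟨a, hy⟩ = T ⟨T.adjoint ⟨a, n1⟩, n2⟩ := pComp_apply_s12 _ n1 n2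
  rw [eLHS, eRHS]
  -- transport the defining property of `cB` to `a`
  have eadj : T.adjoint ⟨a, n1⟩ = T.adjoint ⟨cB (a + T.adjoint ⟨T ⟨a, h1⟩, h2⟩), m1⟩ :=
    congrArg T.adjoint.toFun (Subtype.ext ha_cB)
  have eT : T ⟨T.adjoint ⟨a, n1⟩, n2⟩
      = T ⟨T.adjoint ⟨cB (a + T.adjoint ⟨T ⟨a, h1⟩, h2⟩), m1⟩, m2⟩ :=
    congrArg T.toFun (Subtype.ext eadj)
  rw [eT]
  have : T ⟨T.adjoint ⟨cB (a + T.adjoint ⟨T ⟨a, h1⟩, h2⟩), m1⟩, m2⟩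
      = (a + T.adjoint ⟨T ⟨a, h1⟩, h2⟩) - cB (a + T.adjoint ⟨T ⟨a, h1⟩, h2⟩) :=
    eq_sub_of_add_eq' meq
  rw [this, ← ha_cB]
  abel

end HilbertAux

end AuxLemmas

/-- a quasinormal operator with a normal power `Tⁿ`, `n ≥ 2`, is normal. -/
theorem statement_12 {H : Type*} [NormedAddCommGroup H] [InnerProductSpace ℂ H] [CompleteSpace H]
    (T : H →ₗ.[ℂ] H) (hT : T.IsQuasinormal)
    (n : ℕ) (hn : 2 ≤ n) (hnorm : (T.pPow n).IsNormal) :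
    T.IsNormal := by
  refine hT.isNormal_of_ker ?_
  intro x hx h0
  obtain ⟨m, rfl⟩ := Nat.exists_eq_succ_of_ne_zero (n := n) (by omega)
  have hdm : Dense ((T.pPow (m + 1)).domain : Set H) := hnorm.2.1
  obtain ⟨hxp, h0p⟩ := LinearPMap.ker_adjoint_le_ker_pPow_adjoint hT.2.1 m hdm hx h0
  obtain ⟨hxn, h0n⟩ := hnorm.ker_adjoint_le hxp h0p
  exact hT.ker_pPow m x hxn h0n
end

section
/- Let T be a densely defined symmetric operator on a Hilbert space H whose range is closed and such that ker T = ker T*. Then T is self-adjoint. -/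
open LinearPMap

set_option linter.unusedSectionVars false

/-- a densely defined symmetric operator with closed range and
`ker T = ker T*` is self-adjoint. -/
theorem statement_13 {H : Type*} [NormedAddCommGroup H] [InnerProductSpace ℂ H] [CompleteSpace H]
    (T : H →ₗ.[ℂ] H) (hdense : Dense (T.domain : Set H)) (hsymm : T.IsSymm)
    (hran : IsClosed T.pRan) (hker : T.pKer = T.adjoint.pKer) :
    T.adjoint = T := by
  have hle : T ≤ T.adjoint := LinearPMap.IsFormalAdjoint.le_adjoint hdense hsymm
  set S : Submodule ℂ H := LinearMap.range T.toFun with hS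
  have hScoe : (S : Set H) = T.pRan := by
    rw [hS, LinearMap.coe_range]; rfl
  have hSc : IsClosed (S : Set H) := hScoe ▸ hran
  haveI : CompleteSpace S := hSc.completeSpace_coe
  -- every element of Sᗮ lies in the kernel of the adjoint
  have horth : ∀ u : H, u ∈ Sᗮ → ∃ hu : u ∈ T.adjoint.domain, T.adjoint ⟨u, hu⟩ = 0 := by
    intro u hu
    have h0 : ∀ x : T.domain, (inner ℂ (0 : H) ((x : H)) : ℂ) = inner ℂ u (T x) := by
      intro x
      rw [inner_zero_left]
      exact ((Submodule.mem_orthogonal' S u).mp hu (T x) (LinearMap.mem_range_self _ x)).symm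
    have hmem : u ∈ T.adjoint.domain :=
      LinearPMap.mem_adjoint_domain_of_exists u ⟨0, h0⟩
    exact ⟨hmem, LinearPMap.adjoint_apply_eq hdense ⟨u, hmem⟩ h0⟩
  have key : ∀ y : T.adjoint.domain, ∃ hy : (y : H) ∈ T.domain,
      T ⟨(y : H), hy⟩ = T.adjoint y := by
    intro y
    set v := T.adjoint y with hv
    obtain ⟨x, hx⟩ : ∃ x : T.domain, ((Submodule.orthogonalProjection S v : S) : H) = T x := by
      obtain ⟨x, hx⟩ := (Submodule.orthogonalProjection S v).2
      exact ⟨x, hx.symm⟩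
    set u := v - T x with hu_def
    have huS : u ∈ Sᗮ := by
      rw [hu_def, ← hx]
      exact Submodule.sub_starProjection_mem_orthogonal (K := S) v
    obtain ⟨hu1, hu2⟩ := horth u huS
    have huK : u ∈ T.pKer := by rw [hker]; exact ⟨hu1, hu2⟩
    obtain ⟨huD, huT⟩ := huK
    have hxD : (x : H) ∈ T.adjoint.domain := hle.1 x.2
    have hw : ((y : H) - x) ∈ T.adjoint.domain := sub_mem y.2 hxD
    have hTw : T.adjoint ⟨(y : H) - x, hw⟩ = u := by
      have heq : (⟨(y : H) - x, hw⟩ : T.adjoint.domain) = y - ⟨(x : H), hxD⟩ := rfl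
      rw [heq, LinearPMap.map_sub, ← hle.2 (x := x) (y := ⟨(x : H), hxD⟩) rfl, hu_def, hv]
    have hu0 : u = 0 := by
      have hfa := LinearPMap.adjoint_isFormalAdjoint hdense
        (⟨(y : H) - x, hw⟩ : T.adjoint.domain) (⟨u, huD⟩ : T.domain)
      rw [hTw, huT, inner_zero_right] at hfa
      exact inner_self_eq_zero.mp hfa
    have hwK : ((y : H) - x) ∈ T.pKer := by
      rw [hker]
      exact ⟨hw, by rw [hTw, hu0]⟩
    obtain ⟨hwD, hwT⟩ := hwK
    have hyD : (y : H) ∈ T.domain := by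
      have := T.domain.add_mem x.2 hwD
      simpa using this
    refine ⟨hyD, ?_⟩
    have heq2 : (⟨(y : H), hyD⟩ : T.domain) = x + ⟨(y : H) - x, hwD⟩ := by
      apply Subtype.ext
      simp
    rw [heq2, LinearPMap.map_add, hwT, add_zero]
    have hvx : v = T x := by
      have := hu0
      rw [hu_def, sub_eq_zero] at this
      exact this
    exact hvx.symm
  have hge : T.adjoint ≤ T := by
    refine ⟨fun y hy => (key ⟨y, hy⟩).1, fun a b hab => ?_⟩
    obtain ⟨hy, hTy⟩ := key a
    rw [← hTy]
    congr 1
    exact Subtype.ext hab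
  exact le_antisymm hge hle
end
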